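/- arXiv:1902.09800 — 2 statements merged into one kernel-verified Lean document; each statement's English description precedes it below -/
import Mathlib

section
/- Let T > 0 and let B ∈ ℍ^{n×n} arise from a Floquet normal form M(t) = P(t)exp(tB) of a fundamental matrix of the T-periodic system ẋ = A(t)x, so that exp(TB) is a monodromy matrix. Then: (i) for every standard eigenvalue μ of B, at least one of e^{μT}, e^{conj(μ)T} is a standard eigenvalue of exp(TB); (ii) if μ ∈ ℂ and e^{μT} is a standard eigenvalue of exp(TB), then there exists a standard eigenvalue μ_k of B with e^{μT} ∈ {e^{μ_k T}, e^{conj(μ_k)T}} and Re(μ) = Re(μ_k). -/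
open Matrix Polynomial
open scoped Quaternion

noncomputable section

/-- The two complex components of a quaternion: `q = c1 q + (c2 q) * j`,
identifying `ℂ` with the real span of `1` and `i` in `ℍ`. -/
def Quaternion.c1 (q : ℍ[ℝ]) : ℂ := ⟨q.re, q.imI⟩

def Quaternion.c2 (q : ℍ[ℝ]) : ℂ := ⟨q.imJ, q.imK⟩

/-- The embedding of `ℂ` into `ℍ` as the real span of `1` and `i`. -/
def Complex.toQuat (z : ℂ) : ℍ[ℝ] := ⟨z.re, z.im, 0, 0⟩

/-- The complex adjoint matrix `χ_A` of a quaternion matrix `A = A₁ + A₂·j`: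
the block matrix `[[A₁, A₂], [-conj A₂, conj A₁]]`. -/
def chiMat {n : ℕ} (A : Matrix (Fin n) (Fin n) ℍ[ℝ]) :
    Matrix (Fin n ⊕ Fin n) (Fin n ⊕ Fin n) ℂ :=
  Matrix.fromBlocks (A.map Quaternion.c1) (A.map Quaternion.c2)
    ((-(A.map Quaternion.c2)).map (starRingEnd ℂ)) ((A.map Quaternion.c1).map (starRingEnd ℂ))

/-- `ρ` is a standard eigenvalue of the quaternion matrix `A`: an eigenvalue of the
complex adjoint matrix `χ_A` with nonnegative imaginary part. -/
def IsStdEigenvalue {n : ℕ} (A : Matrix (Fin n) (Fin n) ℍ[ℝ]) (ρ : ℂ) : Prop :=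
  (chiMat A).charpoly.IsRoot ρ ∧ 0 ≤ ρ.im

/-- `s` is the multiset of standard eigenvalues of `A` counted with multiplicity:
it has `n` elements, all with nonnegative imaginary part, and the characteristic
polynomial of `χ_A` is `∏_{z ∈ s} (X - z)·(X - conj z)`. -/
def IsStdEigs {n : ℕ} (A : Matrix (Fin n) (Fin n) ℍ[ℝ]) (s : Multiset ℂ) : Prop :=
  Multiset.card s = n ∧ (∀ z ∈ s, 0 ≤ z.im) ∧
    (chiMat A).charpoly =
      (s.map (fun z => (X - C z) * (X - C (starRingEnd ℂ z)))).prod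

/-- `x : ℝ → ℍ^n` is a solution of the linear quaternionic system `ẋ = A(t)x`. -/
def IsSol {n : ℕ} (A : ℝ → Matrix (Fin n) (Fin n) ℍ[ℝ]) (x : ℝ → Fin n → ℍ[ℝ]) : Prop :=
  ∀ t : ℝ, HasDerivAt x ((A t).mulVec (x t)) t

/-- The norm `‖x‖ = Σ_k |x_k|` on `ℍ^n`. -/
def vecNorm {n : ℕ} (x : Fin n → ℍ[ℝ]) : ℝ := ∑ k, ‖x k‖

/-- The norm `‖A‖ = Σ_{i,j} |a_{ij}|` on `ℍ^{n×n}`. -/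
def matNorm {n : ℕ} (A : Matrix (Fin n) (Fin n) ℍ[ℝ]) : ℝ := ∑ i, ∑ j, ‖A i j‖

/-- Stability (in the sense of Lyapunov) of the system `ẋ = A(t)x` at `t₀`. -/
def StableAt {n : ℕ} (A : ℝ → Matrix (Fin n) (Fin n) ℍ[ℝ]) (t₀ : ℝ) : Prop :=
  ∀ ε > (0:ℝ), ∃ δ > (0:ℝ), ∀ x : ℝ → Fin n → ℍ[ℝ], IsSol A x →
    vecNorm (x t₀) < δ → ∀ t ≥ t₀, vecNorm (x t) < ε

/-- Asymptotic stability of the system `ẋ = A(t)x` at `t₀`. -/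
def AsympStableAt {n : ℕ} (A : ℝ → Matrix (Fin n) (Fin n) ℍ[ℝ]) (t₀ : ℝ) : Prop :=
  StableAt A t₀ ∧ ∃ δ > (0:ℝ), ∀ x : ℝ → Fin n → ℍ[ℝ], IsSol A x →
    vecNorm (x t₀) < δ →
      Filter.Tendsto (fun t => vecNorm (x t)) Filter.atTop (nhds 0)

/-- `M` is a fundamental matrix of `ẋ = A(t)x`: entrywise `M'(t) = A(t)·M(t)`
and `M(t)` is invertible for every `t`. -/
def IsFundamental {n : ℕ} (A M : ℝ → Matrix (Fin n) (Fin n) ℍ[ℝ]) : Prop :=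
  (∀ (t : ℝ) (i j : Fin n), HasDerivAt (fun s => M s i j) ((A t * M t) i j) t) ∧
    ∀ t : ℝ, IsUnit (M t)


section FloquetAux
open NormedSpace

namespace Quaternion
variable (p q : ℍ[ℝ])
@[simp] lemma c1_re : (c1 q).re = q.re := rfl
@[simp] lemma c1_im : (c1 q).im = q.imI := rfl
@[simp] lemma c2_re : (c2 q).re = q.imJ := rfl
@[simp] lemma c2_im : (c2 q).im = q.imK := rfl

lemma c1_zero : c1 0 = 0 := by apply Complex.ext <;> simp
lemma c1_one : c1 1 = 1 := by apply Complex.ext <;> simp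
lemma c2_zero : c2 0 = 0 := by apply Complex.ext <;> simp
lemma c2_one : c2 1 = 0 := by apply Complex.ext <;> simp
lemma c1_add : c1 (p + q) = c1 p + c1 q := by apply Complex.ext <;> simp
lemma c2_add : c2 (p + q) = c2 p + c2 q := by apply Complex.ext <;> simp
lemma c1_smul (r : ℝ) : c1 (r • q) = r • c1 q := by apply Complex.ext <;> simp
lemma c2_smul (r : ℝ) : c2 (r • q) = r • c2 q := by apply Complex.ext <;> simp
lemma c1_mul : c1 (p * q) = c1 p * c1 q - c2 p * (starRingEnd ℂ) (c2 q) := by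
  apply Complex.ext <;>
    simp [Quaternion.re_mul, Quaternion.imI_mul, Complex.mul_re, Complex.mul_im] <;> ring
lemma c2_mul : c2 (p * q) = c1 p * c2 q + c2 p * (starRingEnd ℂ) (c1 q) := by
  apply Complex.ext <;>
    simp [Quaternion.imJ_mul, Quaternion.imK_mul, Complex.mul_re, Complex.mul_im] <;> ring
lemma c1_coe (r : ℝ) : c1 (r : ℍ[ℝ]) = (r : ℂ) := by apply Complex.ext <;> simp
lemma c2_coe (r : ℝ) : c2 (r : ℍ[ℝ]) = 0 := by apply Complex.ext <;> simp
lemma continuous_c1 : Continuous c1 := by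
  have : c1 = fun q : ℍ[ℝ] => (q.re : ℂ) + (q.imI : ℂ) * Complex.I := by
    funext q; apply Complex.ext <;> simp
  rw [this]
  exact ((Complex.continuous_ofReal.comp Quaternion.continuous_re).add
    ((Complex.continuous_ofReal.comp Quaternion.continuous_imI).mul continuous_const))
lemma continuous_c2 : Continuous c2 := by
  have : c2 = fun q : ℍ[ℝ] => (q.imJ : ℂ) + (q.imK : ℂ) * Complex.I := by
    funext q; apply Complex.ext <;> simp
  rw [this]
  exact ((Complex.continuous_ofReal.comp Quaternion.continuous_imJ).add
    ((Complex.continuous_ofReal.comp Quaternion.continuous_imK).mul continuous_const))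
end Quaternion


open Quaternion

def c1Hom : ℍ[ℝ] →+ ℂ := { toFun := c1, map_zero' := c1_zero, map_add' := c1_add }
def c2Hom : ℍ[ℝ] →+ ℂ := { toFun := c2, map_zero' := c2_zero, map_add' := c2_add }

lemma c1_sum {ι : Type*} (s : Finset ι) (f : ι → ℍ[ℝ]) :
    c1 (∑ i ∈ s, f i) = ∑ i ∈ s, c1 (f i) := map_sum c1Hom f s
lemma c2_sum {ι : Type*} (s : Finset ι) (f : ι → ℍ[ℝ]) :
    c2 (∑ i ∈ s, f i) = ∑ i ∈ s, c2 (f i) := map_sum c2Hom f s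

variable {n : ℕ}

lemma mapconj_neg {m k : Type*} (M : Matrix m k ℂ) :
    (-M).map (starRingEnd ℂ) = -(M.map (starRingEnd ℂ)) := by ext i j; simp
lemma mapconj_add {m k : Type*} (M N : Matrix m k ℂ) :
    (M + N).map (starRingEnd ℂ) = M.map (starRingEnd ℂ) + N.map (starRingEnd ℂ) := by
  ext i j; simp
lemma mapconj_sub {m k : Type*} (M N : Matrix m k ℂ) :
    (M - N).map (starRingEnd ℂ) = M.map (starRingEnd ℂ) - N.map (starRingEnd ℂ) := by
  ext i j; simp
lemma mapconj_mul {m k l : Type*} [Fintype k] (M : Matrix m k ℂ) (N : Matrix k l ℂ) :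
    (M * N).map (starRingEnd ℂ) = M.map (starRingEnd ℂ) * N.map (starRingEnd ℂ) :=
  Matrix.map_mul
lemma mapconj_mapconj {m k : Type*} (M : Matrix m k ℂ) :
    (M.map (starRingEnd ℂ)).map (starRingEnd ℂ) = M := by ext i j; simp

lemma map_c1_mul (A B : Matrix (Fin n) (Fin n) ℍ[ℝ]) :
    (A * B).map c1 = A.map c1 * B.map c1 - A.map c2 * (B.map c2).map (starRingEnd ℂ) := by
  ext i j
  simp only [Matrix.map_apply, Matrix.sub_apply, Matrix.mul_apply, Matrix.map_apply]
  rw [c1_sum, ← Finset.sum_sub_distrib]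
  exact Finset.sum_congr rfl fun k _ => c1_mul _ _

lemma map_c2_mul (A B : Matrix (Fin n) (Fin n) ℍ[ℝ]) :
    (A * B).map c2 = A.map c1 * B.map c2 + A.map c2 * (B.map c1).map (starRingEnd ℂ) := by
  ext i j
  simp only [Matrix.map_apply, Matrix.add_apply, Matrix.mul_apply]
  rw [c2_sum, ← Finset.sum_add_distrib]
  exact Finset.sum_congr rfl fun k _ => c2_mul _ _

lemma chiMat_mul (A B : Matrix (Fin n) (Fin n) ℍ[ℝ]) :
    chiMat (A * B) = chiMat A * chiMat B := by
  unfold chiMat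
  rw [Matrix.fromBlocks_multiply, map_c1_mul, map_c2_mul]
  have hTL : A.map c1 * B.map c1 - A.map c2 * (B.map c2).map (starRingEnd ℂ)
      = A.map c1 * B.map c1 + A.map c2 * (-B.map c2).map (starRingEnd ℂ) := by
    rw [mapconj_neg, Matrix.mul_neg, sub_eq_add_neg]
  have hBL : ((-(A.map c1 * B.map c2 + A.map c2 * (B.map c1).map (starRingEnd ℂ))).map
        (starRingEnd ℂ))
      = (-A.map c2).map (starRingEnd ℂ) * B.map c1
        + (A.map c1).map (starRingEnd ℂ) * (-B.map c2).map (starRingEnd ℂ) := by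
    simp only [mapconj_neg, mapconj_add, mapconj_sub, mapconj_mul, mapconj_mapconj,
      neg_mul, mul_neg, neg_add_rev, sub_eq_add_neg]
    try exact add_comm _ _
  have hBR : (A.map c1 * B.map c1 - A.map c2 * (B.map c2).map (starRingEnd ℂ)).map
        (starRingEnd ℂ)
      = (-A.map c2).map (starRingEnd ℂ) * B.map c2
        + (A.map c1).map (starRingEnd ℂ) * (B.map c1).map (starRingEnd ℂ) := by
    simp only [mapconj_neg, mapconj_add, mapconj_sub, mapconj_mul, mapconj_mapconj,
      neg_mul, mul_neg, neg_add_rev, sub_eq_add_neg]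
    try exact add_comm _ _
  rw [hBR, hBL, hTL]

lemma chiMat_one : chiMat (1 : Matrix (Fin n) (Fin n) ℍ[ℝ]) = 1 := by
  unfold chiMat
  rw [Matrix.map_one _ c1_zero c1_one]
  have h2 : (1 : Matrix (Fin n) (Fin n) ℍ[ℝ]).map c2 = 0 := by
    ext i j
    by_cases h : i = j <;> simp [Matrix.one_apply, h, c2_one, c2_zero]
  rw [h2]
  simp [Matrix.fromBlocks_one]

lemma chiMat_add (A B : Matrix (Fin n) (Fin n) ℍ[ℝ]) :
    chiMat (A + B) = chiMat A + chiMat B := by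
  unfold chiMat
  have h1 : (A + B).map c1 = A.map c1 + B.map c1 := by ext i j; simp [c1_add]
  have h2 : (A + B).map c2 = A.map c2 + B.map c2 := by ext i j; simp [c2_add]
  rw [h1, h2]
  ext (i | i) (j | j) <;> simp <;> ring

lemma chiMat_zero : chiMat (0 : Matrix (Fin n) (Fin n) ℍ[ℝ]) = 0 := by
  unfold chiMat
  have h1 : (0 : Matrix (Fin n) (Fin n) ℍ[ℝ]).map c1 = 0 := by ext i j; simp [c1_zero]
  have h2 : (0 : Matrix (Fin n) (Fin n) ℍ[ℝ]).map c2 = 0 := by ext i j; simp [c2_zero]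
  rw [h1, h2]
  simp

lemma chiMat_commutes (r : ℝ) :
    chiMat (algebraMap ℝ (Matrix (Fin n) (Fin n) ℍ[ℝ]) r)
      = algebraMap ℝ (Matrix (Fin n ⊕ Fin n) (Fin n ⊕ Fin n) ℂ) r := by
  unfold chiMat
  ext (i | i) (j | j) <;>
    by_cases h : i = j <;>
      simp [Matrix.algebraMap_matrix_apply, Matrix.fromBlocks, h, c1_coe, c2_coe,
        c1_zero, c2_zero, Quaternion.algebraMap_def]

def chiHom : Matrix (Fin n) (Fin n) ℍ[ℝ] →ₐ[ℝ] Matrix (Fin n ⊕ Fin n) (Fin n ⊕ Fin n) ℂ where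
  toFun := chiMat
  map_one' := chiMat_one
  map_mul' := chiMat_mul
  map_zero' := chiMat_zero
  map_add' := chiMat_add
  commutes' := chiMat_commutes

lemma chiHom_eq (A : Matrix (Fin n) (Fin n) ℍ[ℝ]) : chiHom A = chiMat A := rfl

lemma chiMat_smul (r : ℝ) (A : Matrix (Fin n) (Fin n) ℍ[ℝ]) :
    chiMat (r • A) = r • chiMat A := by
  exact map_smul (chiHom (n := n)).toLinearMap r A

lemma chiMat_continuous : Continuous (chiMat (n := n)) := by
  apply continuous_matrix
  intro i j
  cases i with
  | inl i =>
    cases j with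
    | inl j => exact continuous_c1.comp ((continuous_apply j).comp (continuous_apply i))
    | inr j => exact continuous_c2.comp ((continuous_apply j).comp (continuous_apply i))
  | inr i =>
    cases j with
    | inl j =>
      exact (Complex.continuous_conj.comp
        (continuous_c2.comp ((continuous_apply j).comp (continuous_apply i)))).neg
    | inr j =>
      exact Complex.continuous_conj.comp
        (continuous_c1.comp ((continuous_apply j).comp (continuous_apply i)))


variable {m : Type*} [Fintype m] [DecidableEq m]

lemma eval_charpoly' (M : Matrix m m ℂ) (z : ℂ) :
    M.charpoly.eval z = (z • (1 : Matrix m m ℂ) - M).det := by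
  rw [Matrix.charpoly, ← Polynomial.coe_evalRingHom, RingHom.map_det]
  congr 1
  ext i j
  by_cases h : i = j <;>
    simp [Matrix.charmatrix_apply, Matrix.one_apply, Matrix.diagonal_apply, h]

lemma mem_spectrum_iff_det' (M : Matrix m m ℂ) (z : ℂ) :
    z ∈ spectrum ℂ M ↔ (z • (1 : Matrix m m ℂ) - M).det = 0 := by
  rw [spectrum.mem_iff, Algebra.algebraMap_eq_smul_one, Matrix.isUnit_iff_isUnit_det,
    isUnit_iff_ne_zero, not_not]

lemma isRoot_charpoly_iff' (M : Matrix m m ℂ) (z : ℂ) :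
    M.charpoly.IsRoot z ↔ (z • (1 : Matrix m m ℂ) - M).det = 0 := by
  rw [Polynomial.IsRoot.def, eval_charpoly']

-- conj symmetry of determinants of chi matrices
lemma chi_conj_det {n : ℕ} (Y : Matrix (Fin n) (Fin n) ℍ[ℝ]) {z : ℂ}
    (h : (z • (1 : Matrix (Fin n ⊕ Fin n) (Fin n ⊕ Fin n) ℂ) - chiMat Y).det = 0) :
    ((starRingEnd ℂ z) • (1 : Matrix (Fin n ⊕ Fin n) (Fin n ⊕ Fin n) ℂ) - chiMat Y).det = 0 := by
  classical
  set J : Matrix (Fin n ⊕ Fin n) (Fin n ⊕ Fin n) ℂ :=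
    Matrix.fromBlocks 0 1 (-1) 0 with hJdef
  set J2 : Matrix (Fin n ⊕ Fin n) (Fin n ⊕ Fin n) ℂ :=
    Matrix.fromBlocks 0 (-1) 1 0 with hJ2def
  have hJ : J * J2 = 1 := by
    simp [hJdef, hJ2def, Matrix.fromBlocks_multiply, Matrix.fromBlocks_one]
  have hχ : (chiMat Y).map (starRingEnd ℂ) = J * chiMat Y * J2 := by
    unfold chiMat
    rw [hJdef, hJ2def, Matrix.fromBlocks_multiply, Matrix.fromBlocks_multiply]
    have e1 : ((Y.map Quaternion.c1).map (starRingEnd ℂ)).map (starRingEnd ℂ)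
        = Y.map Quaternion.c1 := by ext i j; simp
    have e2 : ((-(Y.map Quaternion.c2)).map (starRingEnd ℂ)).map (starRingEnd ℂ)
        = -(Y.map Quaternion.c2) := by ext i j; simp
    have e3 : ((-(Y.map Quaternion.c2)).map (starRingEnd ℂ))
        = -((Y.map Quaternion.c2).map (starRingEnd ℂ)) := by ext i j; simp
    have e4 : (-((Y.map Quaternion.c2).map (starRingEnd ℂ))).map (starRingEnd ℂ)
        = -(Y.map Quaternion.c2) := by ext i j; simp
    rw [Matrix.fromBlocks_map]
    simp [← Matrix.map_map, e1, e2, e3, e4]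
  have hz1 : ((z • (1 : Matrix (Fin n ⊕ Fin n) (Fin n ⊕ Fin n) ℂ) - chiMat Y).map
      (starRingEnd ℂ)).det = 0 := by
    rw [← RingHom.mapMatrix_apply, ← RingHom.map_det, h, map_zero]
  have hsm : (z • (1 : Matrix (Fin n ⊕ Fin n) (Fin n ⊕ Fin n) ℂ)).map (starRingEnd ℂ)
      = (starRingEnd ℂ z) • (1 : Matrix (Fin n ⊕ Fin n) (Fin n ⊕ Fin n) ℂ) := by
    ext i j
    by_cases hij : i = j <;> simp [Matrix.one_apply, hij]
  rw [mapconj_sub, hsm, hχ] at hz1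
  have key : (starRingEnd ℂ z) • (1 : Matrix (Fin n ⊕ Fin n) (Fin n ⊕ Fin n) ℂ)
      - J * chiMat Y * J2
      = J * ((starRingEnd ℂ z) • (1 : Matrix (Fin n ⊕ Fin n) (Fin n ⊕ Fin n) ℂ)
          - chiMat Y) * J2 := by
    rw [mul_sub, sub_mul, mul_smul_comm, smul_mul_assoc, mul_one, hJ]
  rw [key, Matrix.det_mul, Matrix.det_mul] at hz1
  have hdetJ : J.det * J2.det = 1 := by rw [← Matrix.det_mul, hJ, Matrix.det_one]
  have : ((starRingEnd ℂ z) • (1 : Matrix (Fin n ⊕ Fin n) (Fin n ⊕ Fin n) ℂ)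
      - chiMat Y).det * (J.det * J2.det) = 0 := by linear_combination hz1
  rwa [hdetJ, mul_one] at this

lemma det_smul_sub' {t : ℝ} (ht : t ≠ 0) (N : Matrix m m ℂ) (z : ℂ) :
    (((t : ℂ) * z) • (1 : Matrix m m ℂ) - t • N).det = 0
      ↔ (z • (1 : Matrix m m ℂ) - N).det = 0 := by
  have h1 : t • N = (t : ℂ) • N := by
    ext i j; simp [Complex.real_smul]
  have h2 : ((t : ℂ) * z) • (1 : Matrix m m ℂ) - t • N
      = (t : ℂ) • (z • (1 : Matrix m m ℂ) - N) := by
    rw [h1, smul_sub, smul_smul]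
  rw [h2, Matrix.det_smul, mul_eq_zero]
  have : ((t : ℂ) ^ Fintype.card m) ≠ 0 :=
    pow_ne_zero _ (Complex.ofReal_ne_zero.mpr ht)
  simp [this]


/-- powers act on eigenvectors -/
lemma pow_mulVec_eig {N : Matrix m m ℂ} {lam : ℂ} {v : m → ℂ}
    (hv : N *ᵥ v = lam • v) (k : ℕ) : (N ^ k) *ᵥ v = (lam ^ k) • v := by
  induction k with
  | zero => simp
  | succ k ih =>
    rw [pow_succ, ← Matrix.mulVec_mulVec, hv, Matrix.mulVec_smul, ih, smul_smul, pow_succ]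
    ring_nf

/-- the linear map `M ↦ M *ᵥ v` -/
def mulVecL (v : m → ℂ) : Matrix m m ℂ →ₗ[ℂ] (m → ℂ) where
  toFun M := M *ᵥ v
  map_add' M N := Matrix.add_mulVec M N v
  map_smul' c M := by simp [Matrix.smul_mulVec]

lemma exp_mulVec_eig (N : Matrix m m ℂ) {lam : ℂ} {v : m → ℂ}
    (hv : N *ᵥ v = lam • v) : (exp N) *ᵥ v = Complex.exp lam • v := by
  letI : SeminormedRing (Matrix m m ℂ) := Matrix.linftyOpSemiNormedRing
  letI : NormedRing (Matrix m m ℂ) := Matrix.linftyOpNormedRing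
  letI : NormedAlgebra ℝ (Matrix m m ℂ) := Matrix.linftyOpNormedAlgebra
  letI : NormedAlgebra ℂ (Matrix m m ℂ) := Matrix.linftyOpNormedAlgebra
  have h1 : HasSum (fun k : ℕ => (((Nat.factorial k : ℕ) : ℂ)⁻¹) • N ^ k) (exp N) :=
    exp_series_hasSum_exp' N
  have hL : Continuous (mulVecL v) := (mulVecL v).continuous_of_finiteDimensional
  have h2 := h1.map (mulVecL v) hL
  have h3 : (fun k : ℕ => (mulVecL v) ((((Nat.factorial k : ℕ) : ℂ)⁻¹) • N ^ k))
      = fun k : ℕ => ((((Nat.factorial k : ℕ) : ℂ)⁻¹) * lam ^ k) • v := by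
    funext k
    simp only [mulVecL, LinearMap.coe_mk, AddHom.coe_mk, _root_.map_smul]
    rw [pow_mulVec_eig hv, smul_smul]
  rw [Function.comp_def, h3] at h2
  have h4 : HasSum (fun k : ℕ => (((Nat.factorial k : ℕ) : ℂ)⁻¹) * lam ^ k) (exp lam) := by
    simpa [smul_eq_mul] using exp_series_hasSum_exp' (𝕂 := ℂ) lam
  have h5 := h4.smul_const v
  have := h2.unique h5
  rw [Complex.exp_eq_exp_ℂ]
  exact this

lemma aeval_mulVec_eig {N : Matrix m m ℂ} {lam : ℂ} {v : m → ℂ}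
    (hv : N *ᵥ v = lam • v) (p : ℂ[X]) :
    (Polynomial.aeval N p) *ᵥ v = (p.eval lam) • v := by
  induction p using Polynomial.induction_on' with
  | add p q hp hq => rw [map_add, Matrix.add_mulVec, hp, hq, eval_add, add_smul]
  | monomial k c =>
    rw [aeval_monomial, ← Matrix.mulVec_mulVec, pow_mulVec_eig hv,
      Algebra.algebraMap_eq_smul_one, Matrix.mulVec_smul, Matrix.smul_mulVec,
      Matrix.one_mulVec, eval_monomial, smul_smul]
    rw [mul_comm (lam ^ k) c]


lemma exists_aeval_eq_exp (N : Matrix m m ℂ) :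
    ∃ p : ℂ[X], Polynomial.aeval N p = exp N := by
  letI : SeminormedRing (Matrix m m ℂ) := Matrix.linftyOpSemiNormedRing
  letI : NormedRing (Matrix m m ℂ) := Matrix.linftyOpNormedRing
  letI : NormedAlgebra ℝ (Matrix m m ℂ) := Matrix.linftyOpNormedAlgebra
  letI : NormedAlgebra ℂ (Matrix m m ℂ) := Matrix.linftyOpNormedAlgebra
  have hmem : exp N ∈ Algebra.adjoin ℂ ({N} : Set (Matrix m m ℂ)) := by
    have hsum := exp_series_hasSum_exp' (𝕂 := ℂ) N
    have htend := hsum.tendsto_sum_nat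
    have hclosed : IsClosed ((Subalgebra.toSubmodule
        (Algebra.adjoin ℂ ({N} : Set (Matrix m m ℂ)))) : Set (Matrix m m ℂ)) :=
      Submodule.closed_of_finiteDimensional _
    refine hclosed.mem_of_tendsto htend (Filter.Eventually.of_forall fun K => ?_)
    refine Submodule.sum_mem _ fun k _ => Submodule.smul_mem _ _ ?_
    exact Subalgebra.pow_mem _ (Algebra.self_mem_adjoin_singleton ℂ N) k
  rw [Algebra.adjoin_singleton_eq_range_aeval] at hmem
  obtain ⟨p, hp⟩ := hmem
  exact ⟨p, hp⟩

lemma spectrum_exp_subset (N : Matrix m m ℂ) {z : ℂ}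
    (hz : z ∈ spectrum ℂ (exp N)) :
    ∃ lam : ℂ, lam ∈ spectrum ℂ N ∧ z = Complex.exp lam := by
  cases isEmpty_or_nonempty m with
  | inl hE =>
    haveI : Subsingleton (Matrix m m ℂ) :=
      ⟨fun a b => by ext i j; exact hE.elim i⟩
    exact absurd (spectrum.mem_iff.mp hz) (not_not.mpr (isUnit_of_subsingleton _))
  | inr hNE =>
    obtain ⟨p, hp⟩ := exists_aeval_eq_exp N
    set q : ℂ[X] := p + N.charpoly * X ^ (p.natDegree + 1) with hqdef
    have hq : Polynomial.aeval N q = exp N := by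
      rw [hqdef, map_add, _root_.map_mul, Matrix.aeval_self_charpoly, zero_mul, add_zero, hp]
    have hmon : (N.charpoly * X ^ (p.natDegree + 1)).Monic :=
      (Matrix.charpoly_monic N).mul (monic_X_pow _)
    have hnd : (N.charpoly * X ^ (p.natDegree + 1)).natDegree
        = Fintype.card m + (p.natDegree + 1) := by
      rw [(Matrix.charpoly_monic N).natDegree_mul (monic_X_pow _),
        Matrix.charpoly_natDegree_eq_dim, natDegree_X_pow]
    have hlt : p.degree < (N.charpoly * X ^ (p.natDegree + 1)).degree := by
      rw [degree_eq_natDegree hmon.ne_zero, hnd]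
      refine lt_of_le_of_lt degree_le_natDegree ?_
      exact_mod_cast Nat.lt_add_left (Fintype.card m) (Nat.lt_succ_self _)
    have hdegq : 0 < q.degree := by
      rw [hqdef, degree_add_eq_right_of_degree_lt hlt, degree_eq_natDegree hmon.ne_zero, hnd]
      exact_mod_cast Nat.add_pos_right _ (Nat.succ_pos _)
    rw [← hq, spectrum.map_polynomial_aeval_of_degree_pos N q hdegq] at hz
    obtain ⟨lam, hlam, hev⟩ := hz
    refine ⟨lam, hlam, ?_⟩
    have hdet : (lam • (1 : Matrix m m ℂ) - N).det = 0 :=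
      (mem_spectrum_iff_det' N lam).mp hlam
    have hcp : N.charpoly.eval lam = 0 := by rw [eval_charpoly']; exact hdet
    have hqp : q.eval lam = p.eval lam := by
      rw [hqdef, eval_add, eval_mul, hcp, zero_mul, add_zero]
    obtain ⟨v, hv0, hv⟩ := (Matrix.exists_mulVec_eq_zero_iff).mpr hdet
    have hEv : N *ᵥ v = lam • v := by
      rw [Matrix.sub_mulVec, Matrix.smul_mulVec, Matrix.one_mulVec, sub_eq_zero] at hv
      exact hv.symm
    have h1 : exp N *ᵥ v = Complex.exp lam • v := exp_mulVec_eig N hEv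
    have h2 : exp N *ᵥ v = (q.eval lam) • v := by
      rw [← hq]; exact aeval_mulVec_eig hEv q
    have h3 : Complex.exp lam = q.eval lam := by
      have h4 : (Complex.exp lam - q.eval lam) • v = 0 := by
        rw [sub_smul, ← h1, ← h2, sub_self]
      rcases smul_eq_zero.mp h4 with h | h
      · exact sub_eq_zero.mp h
      · exact absurd h hv0
    rw [← hev]
    exact h3.symm


lemma chi_exp {n : ℕ} (X : Matrix (Fin n) (Fin n) ℍ[ℝ]) :
    chiMat (exp X) = exp (chiMat X) := by
  letI : SeminormedRing (Matrix (Fin n) (Fin n) ℍ[ℝ]) := Matrix.linftyOpSemiNormedRing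
  letI : NormedRing (Matrix (Fin n) (Fin n) ℍ[ℝ]) := Matrix.linftyOpNormedRing
  letI : NormedAlgebra ℝ (Matrix (Fin n) (Fin n) ℍ[ℝ]) := Matrix.linftyOpNormedAlgebra
  letI : SeminormedRing (Matrix (Fin n ⊕ Fin n) (Fin n ⊕ Fin n) ℂ) :=
    Matrix.linftyOpSemiNormedRing
  letI : NormedRing (Matrix (Fin n ⊕ Fin n) (Fin n ⊕ Fin n) ℂ) := Matrix.linftyOpNormedRing
  letI : NormedAlgebra ℝ (Matrix (Fin n ⊕ Fin n) (Fin n ⊕ Fin n) ℂ) :=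
    Matrix.linftyOpNormedAlgebra
  letI : NormedAlgebra ℚ (Matrix (Fin n) (Fin n) ℍ[ℝ]) :=
    NormedAlgebra.restrictScalars ℚ ℝ (Matrix (Fin n) (Fin n) ℍ[ℝ])
  letI : NormedAlgebra ℚ (Matrix (Fin n ⊕ Fin n) (Fin n ⊕ Fin n) ℂ) :=
    NormedAlgebra.restrictScalars ℚ ℝ (Matrix (Fin n ⊕ Fin n) (Fin n ⊕ Fin n) ℂ)
  have hcont : Continuous (chiHom (n := n)) := by
    have : (chiHom (n := n) : Matrix (Fin n) (Fin n) ℍ[ℝ] → _) = chiMat := by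
      funext A; exact chiHom_eq A
    rw [this]; exact chiMat_continuous
  have := map_exp (chiHom (n := n)) hcont X
  rw [chiHom_eq, chiHom_eq] at this
  exact this

lemma matrix_exp_RC {m : Type} [Fintype m] [DecidableEq m] (N : Matrix m m ℂ) :
    exp N = exp N := by
  letI : SeminormedRing (Matrix m m ℂ) := Matrix.linftyOpSemiNormedRing
  letI : NormedRing (Matrix m m ℂ) := Matrix.linftyOpNormedRing
  letI : NormedAlgebra ℝ (Matrix m m ℂ) := Matrix.linftyOpNormedAlgebra
  letI : NormedAlgebra ℂ (Matrix m m ℂ) := Matrix.linftyOpNormedAlgebra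
  rfl

lemma spectrum_exp_mem {m : Type} [Fintype m] [DecidableEq m] (N : Matrix m m ℂ) {z : ℂ}
    (hz : z ∈ spectrum ℂ N) : Complex.exp z ∈ spectrum ℂ (exp N) := by
  letI : SeminormedRing (Matrix m m ℂ) := Matrix.linftyOpSemiNormedRing
  letI : NormedRing (Matrix m m ℂ) := Matrix.linftyOpNormedRing
  letI : NormedAlgebra ℝ (Matrix m m ℂ) := Matrix.linftyOpNormedAlgebra
  letI : NormedAlgebra ℂ (Matrix m m ℂ) := Matrix.linftyOpNormedAlgebra
  rw [matrix_exp_RC, Complex.exp_eq_exp_ℂ]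
  exact spectrum.exp_mem_exp N hz


end FloquetAux

/-- (i) for every standard eigenvalue `μ` of `B`, one of `e^{μT}`,
`e^{conj(μ)T}` is a standard eigenvalue of `exp(TB)`; (ii) if `e^{μT}` is a standard
eigenvalue of `exp(TB)`, then some standard eigenvalue `μₖ` of `B` satisfies
`e^{μT} ∈ {e^{μₖT}, e^{conj(μₖ)T}}` and `Re μ = Re μₖ`. -/
theorem stmt11 {n : ℕ} (T : ℝ) (hT : 0 < T) (A M P : ℝ → Matrix (Fin n) (Fin n) ℍ[ℝ])
    (B : Matrix (Fin n) (Fin n) ℍ[ℝ]) (hA : Continuous A) (hAper : ∀ t, A (t + T) = A t)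
    (hM : IsFundamental A M) (hP : ∀ t, P (t + T) = P t)
    (hFloq : ∀ t, M t = P t * NormedSpace.exp (t • B))
    (hB : NormedSpace.exp (T • B) = Ring.inverse (M 0) * M T) :
    (∀ μ : ℂ, IsStdEigenvalue B μ →
      IsStdEigenvalue (NormedSpace.exp (T • B)) (Complex.exp (μ * (T : ℂ))) ∨
      IsStdEigenvalue (NormedSpace.exp (T • B)) (Complex.exp (starRingEnd ℂ μ * (T : ℂ)))) ∧
    (∀ μ : ℂ, IsStdEigenvalue (NormedSpace.exp (T • B)) (Complex.exp (μ * (T : ℂ))) →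
      ∃ μk : ℂ, IsStdEigenvalue B μk ∧
        (Complex.exp (μ * (T : ℂ)) = Complex.exp (μk * (T : ℂ)) ∨
          Complex.exp (μ * (T : ℂ)) = Complex.exp (starRingEnd ℂ μk * (T : ℂ))) ∧
        μ.re = μk.re) := by
  have key0 : chiMat (NormedSpace.exp (T • B)) = NormedSpace.exp (T • chiMat B) := by
    rw [chi_exp, chiMat_smul]
  -- re extraction helper
  have hre : ∀ a b : ℂ, Complex.exp (a * (T : ℂ)) = Complex.exp (b * (T : ℂ)) →
      a.re = b.re := by
    intro a b hab
    have h1 : ‖Complex.exp (a * T)‖ = ‖Complex.exp (b * T)‖ := by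
      rw [hab]
    rw [Complex.norm_exp, Complex.norm_exp] at h1
    have h2 : (a * (T:ℂ)).re = (b * (T:ℂ)).re := Real.exp_eq_exp.mp h1
    simp only [Complex.mul_re, Complex.ofReal_re, Complex.ofReal_im, mul_zero,
      sub_zero] at h2
    exact mul_right_cancel₀ hT.ne' h2
  constructor
  · rintro μ ⟨hroot, him⟩
    have hdet : (μ • (1 : Matrix (Fin n ⊕ Fin n) (Fin n ⊕ Fin n) ℂ) - chiMat B).det = 0 :=
      (isRoot_charpoly_iff' _ _).mp hroot
    have hdet2 := (det_smul_sub' (m := Fin n ⊕ Fin n) hT.ne' (chiMat B) μ).mpr hdet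
    have hspec : ((T : ℂ) * μ) ∈ spectrum ℂ (T • chiMat B) :=
      (mem_spectrum_iff_det' _ _).mpr hdet2
    have hexp := spectrum_exp_mem (T • chiMat B) hspec
    rw [← key0] at hexp
    have hroot2 : (chiMat (NormedSpace.exp (T • B))).charpoly.IsRoot
        (Complex.exp (μ * (T : ℂ))) := by
      rw [isRoot_charpoly_iff']
      rw [mul_comm]
      exact (mem_spectrum_iff_det' _ _).mp hexp
    rcases le_or_gt 0 (Complex.exp (μ * (T : ℂ))).im with h | h
    · exact Or.inl ⟨hroot2, h⟩
    · right
      have hconjmul : starRingEnd ℂ (μ * (T : ℂ)) = starRingEnd ℂ μ * (T : ℂ) := by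
        rw [_root_.map_mul, Complex.conj_ofReal]
      have hc : Complex.exp (starRingEnd ℂ μ * (T : ℂ))
          = starRingEnd ℂ (Complex.exp (μ * (T : ℂ))) := by
        rw [← hconjmul, Complex.exp_conj]
      refine ⟨?_, ?_⟩
      · rw [isRoot_charpoly_iff', hc]
        exact chi_conj_det _ ((isRoot_charpoly_iff' _ _).mp hroot2)
      · have him2 : (Complex.exp (starRingEnd ℂ μ * (T : ℂ))).im
            = -(Complex.exp (μ * (T : ℂ))).im := by
          rw [hc, Complex.conj_im]
        rw [him2]
        linarith
  · rintro μ ⟨hroot, -⟩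
    have hdet : ((Complex.exp (μ * (T : ℂ))) • (1 : Matrix (Fin n ⊕ Fin n) (Fin n ⊕ Fin n) ℂ)
        - chiMat (NormedSpace.exp (T • B))).det = 0 := (isRoot_charpoly_iff' _ _).mp hroot
    rw [key0] at hdet
    have hspec : Complex.exp (μ * (T : ℂ)) ∈ spectrum ℂ (NormedSpace.exp (T • chiMat B)) :=
      (mem_spectrum_iff_det' _ _).mpr hdet
    obtain ⟨ν, hν, hzν⟩ := spectrum_exp_subset (T • chiMat B) hspec
    set lam : ℂ := ν / (T : ℂ) with hlamdef
    have hTne : (T : ℂ) ≠ 0 := Complex.ofReal_ne_zero.mpr hT.ne'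
    have hνlam : ν = (T : ℂ) * lam := by
      rw [hlamdef, mul_div_cancel₀]
      exact hTne
    have hdetν : (ν • (1 : Matrix (Fin n ⊕ Fin n) (Fin n ⊕ Fin n) ℂ) - T • chiMat B).det = 0 :=
      (mem_spectrum_iff_det' _ _).mp hν
    rw [hνlam] at hdetν
    have hdetlam : (lam • (1 : Matrix (Fin n ⊕ Fin n) (Fin n ⊕ Fin n) ℂ) - chiMat B).det = 0 :=
      (det_smul_sub' hT.ne' (chiMat B) lam).mp hdetν
    have hzlam : Complex.exp (μ * (T : ℂ)) = Complex.exp (lam * (T : ℂ)) := by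
      rw [hzν, hνlam, mul_comm]
    by_cases him : 0 ≤ lam.im
    · refine ⟨lam, ⟨(isRoot_charpoly_iff' _ _).mpr hdetlam, him⟩, Or.inl hzlam, hre μ lam hzlam⟩
    · refine ⟨starRingEnd ℂ lam, ⟨?_, ?_⟩, Or.inr ?_, ?_⟩
      · exact (isRoot_charpoly_iff' _ _).mpr (chi_conj_det _ hdetlam)
      · rw [Complex.conj_im]
        linarith [not_le.mp him]
      · rw [Complex.conj_conj]
        exact hzlam
      · rw [Complex.conj_re]
        exact hre μ lam hzlam
end
end

section
/- Let T > 0, let A : ℝ → ℍ^{n×n} be continuous with A(t+T) = A(t), and let M be the principal fundamental matrix of ẋ = A(t)x with M(0) = I. Suppose μ ∈ ℂ and p : ℝ → ℍ^n satisfies p(t+T) = p(t) for all t, p is not identically zero, and x(t) := p(t)·e^{μt} (right multiplication by the quaternion e^{μt}, viewing ℂ ⊆ ℍ) is a solution of ẋ = A(t)x. Then e^{μT} or e^{conj(μ)T} is a standard eigenvalue of the monodromy matrix M(T), i.e. one of μ, conj(μ) is a characteristic exponent. -/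
open Matrix Polynomial
open scoped Quaternion

noncomputable section

open Set

lemma mulVec_lip {n : ℕ} (B : Matrix (Fin n) (Fin n) ℍ[ℝ]) (K : NNReal)
    (hK : ∑ i, ∑ j, ‖B i j‖ ≤ K) : LipschitzWith K (fun u => B.mulVec u) := by
  apply LipschitzWith.of_dist_le_mul
  intro u v
  rw [dist_eq_norm, dist_eq_norm, ← Matrix.mulVec_sub]
  set w := u - v
  refine pi_norm_le_iff_of_nonneg (by positivity) |>.2 fun i => ?_
  calc ‖(B.mulVec w) i‖ = ‖∑ j, B i j * w j‖ := rfl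
    _ ≤ ∑ j, ‖B i j * w j‖ := norm_sum_le _ _
    _ ≤ ∑ j, ‖B i j‖ * ‖w‖ := by
        refine Finset.sum_le_sum fun j _ => ?_
        calc ‖B i j * w j‖ ≤ ‖B i j‖ * ‖w j‖ := norm_mul_le _ _
          _ ≤ ‖B i j‖ * ‖w‖ := by
              exact mul_le_mul_of_nonneg_left (norm_le_pi_norm w j) (norm_nonneg _)
    _ = (∑ j, ‖B i j‖) * ‖w‖ := by rw [Finset.sum_mul]
    _ ≤ (K : ℝ) * ‖w‖ := by
        refine mul_le_mul_of_nonneg_right ?_ (norm_nonneg _)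
        refine le_trans ?_ hK
        exact Finset.single_le_sum (f := fun i => ∑ j, ‖B i j‖)
          (fun i _ => by positivity) (Finset.mem_univ i)

lemma sol_unique {n : ℕ} {A : ℝ → Matrix (Fin n) (Fin n) ℍ[ℝ]} (hA : Continuous A)
    {x y : ℝ → Fin n → ℍ[ℝ]} (hx : IsSol A x) (hy : IsSol A y) {a b : ℝ} (hab : a ≤ b)
    (h0 : x a = y a) : x b = y b := by
  set clamp : ℝ → ℝ := fun t => min (max t a) b with hclamp
  have hcl : ∀ t, clamp t ∈ Icc a b := fun t =>
    ⟨le_min (le_max_right t a) hab, min_le_right _ _⟩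
  have hcleq : ∀ t ∈ Icc a b, clamp t = t := by
    intro t ht
    simp [hclamp, max_eq_left ht.1, min_eq_left ht.2]
  have hcont : Continuous fun t => ∑ i, ∑ j, ‖A (clamp t) i j‖ := by
    have hc : Continuous clamp := ((continuous_id.max continuous_const).min continuous_const)
    refine continuous_finset_sum _ fun i _ => continuous_finset_sum _ fun j _ => ?_
    exact (((continuous_apply j).comp ((continuous_apply i).comp (hA.comp hc)))).norm
  obtain ⟨t0, _, ht0'⟩ := isCompact_Icc.exists_isMaxOn (nonempty_Icc.2 hab)
    (hcont.continuousOn (s := Icc a b))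
  have ht0 := ht0'
  set K : NNReal := (∑ i, ∑ j, ‖A (clamp t0) i j‖).toNNReal with hKdef
  have hv : ∀ t, LipschitzWith K (fun u => (A (clamp t)).mulVec u) := by
    intro t
    apply mulVec_lip
    calc ∑ i, ∑ j, ‖A (clamp t) i j‖ ≤ ∑ i, ∑ j, ‖A (clamp t0) i j‖ := by
          have := ht0 (hcl t)
          simpa [hcleq _ (hcl t)] using this
      _ ≤ K := Real.le_coe_toNNReal _
  have := ODE_solution_unique (v := fun t u => (A (clamp t)).mulVec u) hv
    (fun t _ => (hx t).continuousAt.continuousWithinAt)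
    (fun t ht => by
      have h' : clamp t = t := hcleq t (Ico_subset_Icc_self ht)
      simpa [h'] using (hx t).hasDerivWithinAt)
    (fun t _ => (hy t).continuousAt.continuousWithinAt)
    (fun t ht => by
      have h' : clamp t = t := hcleq t (Ico_subset_Icc_self ht)
      simpa [h'] using (hy t).hasDerivWithinAt)
    h0
  exact this (right_mem_Icc.2 hab)

lemma c1_mul (a b : ℍ[ℝ]) : (a * b).c1 = a.c1 * b.c1 - a.c2 * (starRingEnd ℂ) b.c2 := by
  simp [Quaternion.c1, Quaternion.c2, Complex.ext_iff, Quaternion.re_mul, Quaternion.imI_mul,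
    Complex.mul_re, Complex.mul_im, Complex.sub_re, Complex.sub_im]
  constructor <;> ring

lemma c2_mul (a b : ℍ[ℝ]) : (a * b).c2 = a.c1 * b.c2 + a.c2 * (starRingEnd ℂ) b.c1 := by
  simp [Quaternion.c1, Quaternion.c2, Complex.ext_iff, Quaternion.imJ_mul, Quaternion.imK_mul,
    Complex.mul_re, Complex.mul_im, Complex.add_re, Complex.add_im]
  constructor <;> ring

@[simp] lemma c1_toQuat (z : ℂ) : (Complex.toQuat z).c1 = z := rfl
@[simp] lemma c2_toQuat (z : ℂ) : (Complex.toQuat z).c2 = 0 := rfl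

lemma quat_eq_zero_of_c (a : ℍ[ℝ]) (h1 : a.c1 = 0) (h2 : a.c2 = 0) : a = 0 := by
  rw [Complex.ext_iff] at h1 h2
  simp [Quaternion.c1, Quaternion.c2] at h1 h2
  ext <;> simp [h1.1, h1.2, h2.1, h2.2]

def C1 : ℍ[ℝ] →+ ℂ where
  toFun := Quaternion.c1
  map_zero' := rfl
  map_add' _ _ := rfl

def C2 : ℍ[ℝ] →+ ℂ where
  toFun := Quaternion.c2
  map_zero' := rfl
  map_add' _ _ := rfl

lemma isRoot_charpoly_of_vec {m : Type*} [Fintype m] [DecidableEq m]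
    (M : Matrix m m ℂ) (w : ℂ) (v : m → ℂ) (hv : v ≠ 0) (h : M.mulVec v = w • v) :
    M.charpoly.IsRoot w := by
  have hdet : (w • (1 : Matrix m m ℂ) - M).det = 0 := by
    rw [← Matrix.exists_mulVec_eq_zero_iff]
    refine ⟨v, hv, ?_⟩
    rw [Matrix.sub_mulVec, Matrix.smul_mulVec, Matrix.one_mulVec, h, sub_self]
  have : (Polynomial.evalRingHom w) M.charpoly = 0 := by
    rw [Matrix.charpoly, RingHom.map_det]
    convert hdet using 2
    ext i j
    by_cases hij : i = j <;>
      simp [hij, charmatrix_apply_eq, charmatrix_apply_ne, Matrix.one_apply, M.charmatrix_apply_ne]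
  simpa [Polynomial.IsRoot] using this

lemma eig_pair {n : ℕ} (B : Matrix (Fin n) (Fin n) ℍ[ℝ]) (q : Fin n → ℍ[ℝ]) (hq : q ≠ 0)
    (z : ℂ) (h : B.mulVec q = fun k => q k * Complex.toQuat z) :
    (chiMat B).charpoly.IsRoot z ∧ (chiMat B).charpoly.IsRoot ((starRingEnd ℂ) z) := by
  -- componentwise complex identities
  have h1 : ∀ i, ∑ j, ((B i j).c1 * (q j).c1 - (B i j).c2 * (starRingEnd ℂ) (q j).c2)
      = z * (q i).c1 := by
    intro i
    have := congrArg C1 (congrFun h i)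
    simp only [Matrix.mulVec, dotProduct] at this
    rw [map_sum] at this
    simpa [show ∀ a, C1 a = a.c1 from fun _ => rfl, c1_mul, mul_comm] using this
  have h2 : ∀ i, ∑ j, ((B i j).c1 * (q j).c2 + (B i j).c2 * (starRingEnd ℂ) (q j).c1)
      = (starRingEnd ℂ) z * (q i).c2 := by
    intro i
    have := congrArg C2 (congrFun h i)
    simp only [Matrix.mulVec, dotProduct] at this
    rw [map_sum] at this
    simpa [show ∀ a, C2 a = a.c2 from fun _ => rfl, c2_mul, mul_comm] using this
  obtain ⟨i0, hi0⟩ : ∃ i, q i ≠ 0 := by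
    by_contra hc
    push_neg at hc
    exact hq (funext hc)
  constructor
  · refine isRoot_charpoly_of_vec _ z
      (Sum.elim (fun i => (q i).c1) (fun i => -(starRingEnd ℂ) ((q i).c2))) ?_ ?_
    · intro hv
      apply hi0
      have hv1 := congrFun hv (Sum.inl i0)
      have hv2 := congrFun hv (Sum.inr i0)
      simp at hv1 hv2
      exact quat_eq_zero_of_c _ hv1 hv2
    · funext k
      cases k with
      | inl i =>
        simp only [Matrix.mulVec, dotProduct, Fintype.sum_sum_type, chiMat,
          Matrix.fromBlocks_apply₁₁, Matrix.fromBlocks_apply₁₂, Matrix.map_apply,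
          Sum.elim_inl, Sum.elim_inr, Pi.smul_apply, smul_eq_mul]
        rw [← h1 i, ← Finset.sum_add_distrib]
        apply Finset.sum_congr rfl
        intros; ring
      | inr i =>
        simp only [Matrix.mulVec, dotProduct, Fintype.sum_sum_type, chiMat,
          Matrix.fromBlocks_apply₂₁, Matrix.fromBlocks_apply₂₂, Matrix.map_apply,
          Matrix.neg_apply, Sum.elim_inl, Sum.elim_inr, Pi.smul_apply, smul_eq_mul]
        rw [← Finset.sum_add_distrib]
        have e : ∀ j, (starRingEnd ℂ) (-(B i j).c2) * (q j).c1
            + (starRingEnd ℂ) (B i j).c1 * -(starRingEnd ℂ) ((q j).c2)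
            = -((starRingEnd ℂ) ((B i j).c1 * (q j).c2
                + (B i j).c2 * (starRingEnd ℂ) (q j).c1)) := by
          intro j
          simp only [_root_.map_add, _root_.map_mul, map_neg, Complex.conj_conj]
          ring
        rw [Finset.sum_congr rfl (fun j _ => e j), Finset.sum_neg_distrib, ← map_sum, h2 i]
        simp only [_root_.map_mul, Complex.conj_conj]
        ring
  · refine isRoot_charpoly_of_vec _ ((starRingEnd ℂ) z)
      (Sum.elim (fun i => (q i).c2) (fun i => (starRingEnd ℂ) ((q i).c1))) ?_ ?_
    · intro hv
      apply hi0
      have hv1 := congrFun hv (Sum.inl i0)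
      have hv2 := congrFun hv (Sum.inr i0)
      simp at hv1 hv2
      exact quat_eq_zero_of_c _ hv2 hv1
    · funext k
      cases k with
      | inl i =>
        simp only [Matrix.mulVec, dotProduct, Fintype.sum_sum_type, chiMat,
          Matrix.fromBlocks_apply₁₁, Matrix.fromBlocks_apply₁₂, Matrix.map_apply,
          Sum.elim_inl, Sum.elim_inr, Pi.smul_apply, smul_eq_mul]
        rw [← h2 i, ← Finset.sum_add_distrib]
      | inr i =>
        simp only [Matrix.mulVec, dotProduct, Fintype.sum_sum_type, chiMat,
          Matrix.fromBlocks_apply₂₁, Matrix.fromBlocks_apply₂₂, Matrix.map_apply,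
          Matrix.neg_apply, Sum.elim_inl, Sum.elim_inr, Pi.smul_apply, smul_eq_mul]
        rw [← Finset.sum_add_distrib]
        have e : ∀ j, (starRingEnd ℂ) (-(B i j).c2) * (q j).c2
            + (starRingEnd ℂ) (B i j).c1 * (starRingEnd ℂ) ((q j).c1)
            = (starRingEnd ℂ) ((B i j).c1 * (q j).c1
                - (B i j).c2 * (starRingEnd ℂ) (q j).c2) := by
          intro j
          simp only [_root_.map_sub, _root_.map_mul, map_neg, Complex.conj_conj]
          ring
        rw [Finset.sum_congr rfl (fun j _ => e j), ← map_sum, h1 i]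
        simp only [_root_.map_mul]

lemma toQuat_ne_zero' {z : ℂ} (hz : z ≠ 0) : Complex.toQuat z ≠ 0 := by
  intro h
  apply hz
  have h1 := congrArg QuaternionAlgebra.re h
  have h2 := congrArg QuaternionAlgebra.imI h
  simp [Complex.toQuat] at h1 h2
  exact Complex.ext h1 h2

@[simp] lemma toQuat_one' : Complex.toQuat 1 = 1 := by
  ext <;> simp [Complex.toQuat] <;> rfl

/-- if `x(t) = p(t)·e^{μt}` is a nontrivial solution with `p` `T`-periodic,
then `e^{μT}` or `e^{conj(μ)T}` is a standard eigenvalue of the monodromy matrix `M(T)`. -/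

theorem stmt17 {n : ℕ} (T : ℝ) (hT : 0 < T) (A M : ℝ → Matrix (Fin n) (Fin n) ℍ[ℝ])
    (hA : Continuous A) (hAper : ∀ t, A (t + T) = A t) (hM : IsFundamental A M)
    (hM0 : M 0 = 1) (μ : ℂ) (p : ℝ → Fin n → ℍ[ℝ]) (hp : p ≠ 0)
    (hper : ∀ t, p (t + T) = p t)
    (hsol : IsSol A (fun t k => p t k * Complex.toQuat (Complex.exp (μ * (t : ℂ))))) :
    IsStdEigenvalue (M T) (Complex.exp (μ * (T : ℂ))) ∨
    IsStdEigenvalue (M T) (Complex.exp (starRingEnd ℂ μ * (T : ℂ))) := by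
  classical
  set x : ℝ → Fin n → ℍ[ℝ] := fun t k => p t k * Complex.toQuat (Complex.exp (μ * (t : ℂ)))
    with hxdef
  have hx0 : x 0 = p 0 := by
    funext k
    simp [hxdef, Complex.exp_zero]
  -- the solution y(t) = M(t) * (p 0)
  have hysol : IsSol A (fun t => (M t).mulVec (p 0)) := by
    intro t
    have : HasDerivAt (fun s => (M s).mulVec (p 0)) ((A t * M t).mulVec (p 0)) t := by
      rw [hasDerivAt_pi]
      intro i
      have : ∀ j, HasDerivAt (fun s => M s i j * p 0 j) ((A t * M t) i j * p 0 j) t :=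
        fun j => (hM.1 t i j).mul_const (p 0 j)
      simpa [Matrix.mulVec, dotProduct] using
        HasDerivAt.fun_sum (fun j (_ : j ∈ Finset.univ) => this j)
    simpa only [Matrix.mulVec_mulVec] using this
  -- p 0 ≠ 0
  have hp0 : p 0 ≠ 0 := by
    intro hp0
    apply hp
    -- find t1 ≥ 0 with p t1 ≠ 0, derive contradiction via uniqueness
    funext t k
    by_contra hk
    have hpt : p t ≠ 0 := fun hz => hk (by simp [hz])
    -- shift t to be nonnegative
    have hshift : ∀ m : ℕ, ∀ s : ℝ, p (s + m * T) = p s := by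
      intro m
      induction m with
      | zero => simp
      | succ m ih =>
        intro s
        have : s + (m + 1 : ℕ) * T = (s + m * T) + T := by push_cast; ring
        rw [this, hper, ih]
    obtain ⟨m, hm⟩ := exists_nat_ge ((-t) / T)
    have hmT : 0 ≤ t + m * T := by
      have := (div_le_iff₀ hT).mp hm
      linarith
    have ht1 : p (t + m * T) ≠ 0 := by rw [hshift]; exact hpt
    -- x is a solution vanishing at 0, so x vanishes at t + m*T
    have hzero : IsSol A (fun _ => (0 : Fin n → ℍ[ℝ])) := by
      intro s
      simpa [Matrix.mulVec_zero] using (hasDerivAt_const s (0 : Fin n → ℍ[ℝ]))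
    have hx00 : x 0 = (fun _ => (0 : Fin n → ℍ[ℝ])) 0 := by
      rw [hx0, hp0]
    have hxt : x (t + m * T) = 0 := sol_unique hA hsol hzero hmT hx00
    apply ht1
    funext l
    have := congrFun hxt l
    simp only [hxdef] at this
    rcases mul_eq_zero.mp this with h | h
    · exact h
    · exact absurd h (toQuat_ne_zero' (Complex.exp_ne_zero _))
  -- uniqueness on [0, T] gives the eigen relation
  have hx0y : x 0 = (fun t => (M t).mulVec (p 0)) 0 := by
    show x 0 = (M 0).mulVec (p 0)
    rw [hx0, hM0, Matrix.one_mulVec]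
  have hxT : x T = (M T).mulVec (p 0) :=
    sol_unique hA hsol hysol hT.le hx0y
  have heig : (M T).mulVec (p 0) = fun k => p 0 k * Complex.toQuat (Complex.exp (μ * (T : ℂ))) := by
    rw [← hxT]
    funext k
    have : p T = p 0 := by simpa using hper 0
    simp [hxdef, this]
  obtain ⟨hr1, hr2⟩ := eig_pair (M T) (p 0) hp0 _ heig
  have hconj : Complex.exp (starRingEnd ℂ μ * (T : ℂ))
      = (starRingEnd ℂ) (Complex.exp (μ * (T : ℂ))) := by
    rw [← Complex.exp_conj, _root_.map_mul, Complex.conj_ofReal]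
  by_cases him : 0 ≤ (Complex.exp (μ * (T : ℂ))).im
  · exact Or.inl ⟨hr1, him⟩
  · refine Or.inr ⟨by rwa [hconj], ?_⟩
    rw [hconj]
    simp only [Complex.conj_im]
    linarith [lt_of_not_ge him]
end
end
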